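/- Let G be a group, H a subgroup of G of finite index, and G_1, …, G_k subgroups of G each containing H. Assume that either (i) every G_i is subnormal in G, or (ii) there is a chain H = K_0 ≤ K_1 ≤ ⋯ ≤ K_n = G of subgroups in which each K_{j-1} is normal in K_j and each index [K_j : K_{j-1}] is prime. Then for any elements a_1, …, a_k ∈ G, the number of distinct left cosets xH with x ∈ ⋃_{i=1}^k a_iG_i is at least the number of integers n with 0 ≤ n < [G : H] such that [G : G_i] divides n for some i ∈ {1, …, k}. -/

import Mathlib

open scoped Classical Pointwise

universe u v w

/-- A subgroup `H` of a group `G` is subnormal if there is a finite chain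
`H = H_0 ≤ H_1 ≤ ⋯ ≤ H_n = G` in which each `H_{i-1}` is normal in `H_i`. -/
def IsSubnormal {G : Type*} [Group G] (H : Subgroup G) : Prop :=
  ∃ (n : ℕ) (f : Fin (n + 1) → Subgroup G),
    f 0 = H ∧ f (Fin.last n) = ⊤ ∧
    ∀ i : Fin n, f i.castSucc ≤ f i.succ ∧
      ∀ x ∈ f i.succ, ∀ h ∈ f i.castSucc, x * h * x⁻¹ ∈ f i.castSucc

namespace CosetCount



/-- `SN A B`: there is a finite chain from `A` to `B` with each step normal. -/
inductive SN {G : Type u} [Group G] : Subgroup G → Subgroup G → Prop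
  | refl (A : Subgroup G) : SN A A
  | step {A B C : Subgroup G} : SN A B → B ≤ C →
      (∀ x ∈ C, ∀ h ∈ B, x * h * x⁻¹ ∈ B) → SN A C

variable {G : Type u} [Group G]

lemma SN.le {A B : Subgroup G} (h : SN A B) : A ≤ B := by
  induction h with
  | refl => exact le_rfl
  | step _ hle _ ih => exact ih.trans hle

lemma SN.trans {A B C : Subgroup G} (h1 : SN A B) (h2 : SN B C) : SN A C := by
  induction h2 with
  | refl => exact h1
  | step _ hle hconj ih => exact SN.step ih hle hconj

lemma sn_of_chain {n : ℕ} (f : Fin (n + 1) → Subgroup G)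
    (hstep : ∀ i : Fin n, f i.castSucc ≤ f i.succ ∧
      ∀ x ∈ f i.succ, ∀ h ∈ f i.castSucc, x * h * x⁻¹ ∈ f i.castSucc) :
    ∀ j, SN (f 0) (f j) := by
  intro j
  induction j using Fin.induction with
  | zero => exact SN.refl _
  | succ i ihj => exact SN.step ihj (hstep i).1 (hstep i).2

lemma sn_top_of_isSubnormal {H : Subgroup G} (h : IsSubnormal H) : SN H ⊤ := by
  obtain ⟨n, f, h0, hl, hstep⟩ := h
  have := sn_of_chain f hstep (Fin.last n)
  rwa [h0, hl] at this

lemma SN.subgroupOf {A B : Subgroup G} (h : SN A B) (K : Subgroup G) :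
    SN (A.subgroupOf K) (B.subgroupOf K) := by
  induction h with
  | refl => exact SN.refl _
  | step _ hle hconj ih =>
      refine ih.step (fun x hx => ?_) (fun x hx h hh => ?_)
      · exact hle hx
      · have := hconj x hx h hh
        simpa [Subgroup.mem_subgroupOf] using this

lemma SN.map {G' : Type u} [Group G'] {A B : Subgroup G} (h : SN A B) (φ : G →* G') :
    SN (A.map φ) (B.map φ) := by
  induction h with
  | refl => exact SN.refl _
  | step _ hle hconj ih =>
      refine ih.step (Subgroup.map_mono hle) ?_
      rintro x hx h hh
      obtain ⟨x₀, hx₀, rfl⟩ := hx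
      obtain ⟨h₀, hh₀, rfl⟩ := hh
      exact ⟨x₀ * h₀ * x₀⁻¹, hconj x₀ hx₀ h₀ hh₀, by simp⟩

lemma SN.subgroupOf_top {A : Subgroup G} (h : SN A ⊤) (K : Subgroup G) :
    SN (A.subgroupOf K) (⊤ : Subgroup K) := by
  have := h.subgroupOf K
  rwa [Subgroup.top_subgroupOf] at this

lemma SN.map_top {G' : Type u} [Group G'] {A : Subgroup G} (h : SN A ⊤) {φ : G →* G'}
    (hφ : Function.Surjective φ) : SN (A.map φ) (⊤ : Subgroup G') := by
  have := h.map φ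
  rwa [Subgroup.map_top_of_surjective φ hφ] at this

lemma SN.inf {A B : Subgroup G} (hA : SN A ⊤) (hB : SN B ⊤) : SN (A ⊓ B) ⊤ := by
  have h1 : SN (A.subgroupOf B) (⊤ : Subgroup B) := hA.subgroupOf_top B
  have h2 := h1.map B.subtype
  rw [Subgroup.subgroupOf_map_subtype] at h2
  have h3 : ((⊤ : Subgroup B).map B.subtype) = B := by
    rw [← MonoidHom.range_eq_map, Subgroup.range_subtype]
  rw [h3] at h2
  exact h2.trans hB

lemma SN.exists_normal {A T : Subgroup G} (h : SN A T) : T = ⊤ → A ≠ ⊤ →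
    ∃ K : Subgroup G, K.Normal ∧ A ≤ K ∧ K ≠ ⊤ := by
  induction h with
  | refl => exact fun hT hA => absurd hT hA
  | @step B C hAB hle hconj ih =>
      intro hT hA
      subst hT
      by_cases hB : B = ⊤
      · exact ih hB hA
      · exact ⟨B, ⟨fun h hh x => hconj x trivial h hh⟩, hAB.le, hB⟩

lemma sn_top_of_prime_card {Q : Type u} [Group Q] (hp : (Nat.card Q).Prime)
    (A : Subgroup Q) : SN A ⊤ := by
  have : Fact (Nat.card Q).Prime := ⟨hp⟩
  rcases A.eq_bot_or_eq_top_of_prime_card with rfl | rfl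
  · exact SN.step (SN.refl ⊥) bot_le (by simp [Subgroup.mem_bot])
  · exact SN.refl ⊤


lemma natCard_subtype_lt (X : ℕ) (P : ℕ → Prop) :
    Nat.card {n : ℕ // n < X ∧ P n} = ((Finset.range X).filter P).card := by
  rw [← Nat.card_eq_finsetCard]
  exact Nat.card_congr (Equiv.subtypeEquivRight (by simp [and_comm]))

lemma count_periodic (N M : ℕ) (P : ℕ → Prop) (hP : ∀ j m, P (j * M + m) ↔ P m) :
    ((Finset.range (N * M)).filter P).card = N * ((Finset.range M).filter P).card := by
  induction N with
  | zero => simp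
  | succ N ih =>
      have h1 : (N + 1) * M = N * M + M := by ring
      have hdisj : Disjoint ((Finset.range (N * M)).filter P)
          (((Finset.range M).map (addLeftEmbedding (N * M))).filter P) := by
        simp only [Finset.disjoint_left, Finset.mem_filter, Finset.mem_map, Finset.mem_range]
        rintro x ⟨hx, _⟩ ⟨⟨m, hm, rfl⟩, _⟩
        simp only [addLeftEmbedding_apply] at hx
        omega
      rw [h1, Finset.range_add, Finset.filter_union, Finset.card_union_of_disjoint hdisj, ih,
        Finset.filter_map, Finset.card_map]
      have h2 : (Finset.range M).filter (P ∘ (addLeftEmbedding (N * M)))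
          = (Finset.range M).filter P := by
        apply Finset.filter_congr
        intro m _
        simp [Function.comp, addLeftEmbedding_apply, hP N m]
      rw [h2]
      ring

lemma finite_pair {α : Type*} [Finite α] (M : ℕ) (Q : α × ℕ → Prop) :
    Finite {p : α × ℕ // p.2 < M ∧ Q p} := by
  refine Finite.of_injective (fun p => ((p.1.1 : α), (⟨p.1.2, p.2.1⟩ : Fin M))) ?_
  rintro ⟨⟨x, m⟩, hm⟩ ⟨⟨y, l⟩, hl⟩ h
  simp only [Prod.mk.injEq, Fin.mk.injEq] at h
  exact Subtype.ext (by simp [h.1, h.2])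

lemma finite_nat_lt (X : ℕ) (P : ℕ → Prop) : Finite {n : ℕ // n < X ∧ P n} :=
  Finite.of_injective (fun n => (⟨n.1, n.2.1⟩ : Fin X)) (by rintro ⟨n, hn⟩ ⟨l, hl⟩ h; simpa using h)

lemma natCard_sigma {ι : Type*} [Fintype ι] (T : ι → Type*) [∀ i, Finite (T i)] :
    Nat.card (Σ i, T i) = ∑ i, Nat.card (T i) := by
  letI : ∀ i, Fintype (T i) := fun i => Fintype.ofFinite _
  simp [Nat.card_eq_fintype_card]

lemma natCard_prod_eq_sum {A : Type*} {B : Type*} [Fintype A] (P : A × B → Prop)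
    [∀ a, Finite {b : B // P (a, b)}] :
    Nat.card {p : A × B // P p} = ∑ a, Nat.card {b : B // P (a, b)} := by
  rw [Nat.card_congr (Equiv.subtypeProdEquivSigmaSubtype (fun (a : A) (b : B) => P (a, b)))]
  exact natCard_sigma _



variable {G : Type u} [Group G]

lemma mem_smul_coe_iff {A : Subgroup G} {x g : G} : g ∈ x • (A : Set G) ↔ x⁻¹ * g ∈ A := by
  rw [Set.mem_smul_set_iff_inv_smul_mem, smul_eq_mul]
  exact Iff.rfl

lemma smul_coe_eq_of_mem {A : Subgroup G} {x y : G} (h : y ∈ x • (A : Set G)) (g : G) :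
    g ∈ x • (A : Set G) ↔ y⁻¹ * g ∈ A := by
  rw [mem_smul_coe_iff] at h ⊢
  constructor
  · intro hg
    have := mul_mem (inv_mem h) hg
    simpa [mul_assoc] using this
  · intro hg
    have := mul_mem h hg
    simpa [mul_assoc] using this

lemma mem_mk_image_iff {H A : Subgroup G} (hHA : H ≤ A) {x g : G} :
    (QuotientGroup.mk g : G ⧸ H) ∈ (QuotientGroup.mk : G → G ⧸ H) '' (x • (A : Set G))
      ↔ g ∈ x • (A : Set G) := by
  constructor
  · rintro ⟨y, hy, hyg⟩
    have h' : y⁻¹ * g ∈ H := by rwa [QuotientGroup.eq] at hyg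
    rw [mem_smul_coe_iff] at hy ⊢
    have : x⁻¹ * g = (x⁻¹ * y) * (y⁻¹ * g) := by group
    rw [this]
    exact mul_mem hy (hHA h')
  · exact fun h => ⟨g, h, rfl⟩

lemma mem_mk_image_self_iff (H : Subgroup G) {x : G} (q : G ⧸ H) :
    q ∈ (QuotientGroup.mk : G → G ⧸ H) '' (x • (H : Set G)) ↔ q = QuotientGroup.mk x := by
  induction q using Quotient.ind'
  rename_i g
  show (QuotientGroup.mk g : G ⧸ H) ∈ _ ↔ (QuotientGroup.mk g : G ⧸ H) = _
  rw [mem_mk_image_iff le_rfl, mem_smul_coe_iff, eq_comm, QuotientGroup.eq]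

lemma mem_mk_image_top_iff (H : Subgroup G) {x : G} (q : G ⧸ H) :
    q ∈ (QuotientGroup.mk : G → G ⧸ H) '' (x • ((⊤ : Subgroup G) : Set G)) := by
  induction q using Quotient.ind'
  rename_i g
  exact (mem_mk_image_iff le_top).2 (by simp [mem_smul_coe_iff])

lemma relindex_sup_aux (K : Subgroup G) [K.Normal] (A : Subgroup G) :
    A.relIndex (A ⊔ K) = A.relIndex K := by
  have compat : ∀ k k' : K, @Setoid.r _ (QuotientGroup.leftRel (A.subgroupOf K)) k k' →
      @Setoid.r _ (QuotientGroup.leftRel (A.subgroupOf (A ⊔ K)))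
        (Subgroup.inclusion (le_sup_right : K ≤ A ⊔ K) k)
        (Subgroup.inclusion le_sup_right k') := by
    intro k k' h
    rw [QuotientGroup.leftRel_apply] at h ⊢
    rwa [Subgroup.mem_subgroupOf] at h ⊢
  let φ : (K ⧸ (A.subgroupOf K)) → ((A ⊔ K : Subgroup G) ⧸ (A.subgroupOf (A ⊔ K))) :=
    Quotient.map' (Subgroup.inclusion le_sup_right) compat
  have hinj : Function.Injective φ := by
    intro q q'
    induction q using Quotient.ind'
    induction q' using Quotient.ind'
    rename_i k k'
    intro h
    have h2 := Quotient.exact' h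
    rw [QuotientGroup.leftRel_apply, Subgroup.mem_subgroupOf] at h2
    apply Quotient.sound'
    rwa [QuotientGroup.leftRel_apply, Subgroup.mem_subgroupOf]
  have hsurj : Function.Surjective φ := by
    intro q
    induction q using Quotient.ind'
    rename_i x
    have hx : (x : G) ∈ ((K ⊔ A : Subgroup G) : Set G) := by
      rw [sup_comm]
      exact x.2
    rw [Subgroup.normal_mul] at hx
    obtain ⟨k, hk, α, hα, hv⟩ := hx
    refine ⟨Quotient.mk'' ⟨k, hk⟩, ?_⟩
    show Quotient.map' _ _ _ = _
    rw [Quotient.map'_mk'']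
    apply Quotient.sound'
    rw [QuotientGroup.leftRel_apply, Subgroup.mem_subgroupOf]
    show ((Subgroup.inclusion le_sup_right ⟨k, hk⟩ : (A ⊔ K : Subgroup G)) : G)⁻¹ * x ∈ A
    have : ((Subgroup.inclusion (le_sup_right : K ≤ A ⊔ K) ⟨k, hk⟩ :
        (A ⊔ K : Subgroup G)) : G) = k := rfl
    rw [this, ← hv]
    simpa using hα
  have : Nat.card (K ⧸ (A.subgroupOf K))
      = Nat.card ((A ⊔ K : Subgroup G) ⧸ (A.subgroupOf (A ⊔ K))) :=
    Nat.card_congr (Equiv.ofBijective φ ⟨hinj, hsurj⟩)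
  unfold Subgroup.relIndex
  rw [Subgroup.index_eq_card, Subgroup.index_eq_card, this]

lemma index_map_mk' (K : Subgroup G) [K.Normal] (A : Subgroup G) :
    ((A.map (QuotientGroup.mk' K)).index) * A.relIndex K = A.index := by
  rw [Subgroup.index_map, QuotientGroup.ker_mk',
    MonoidHom.range_eq_top.2 (QuotientGroup.mk'_surjective K), Subgroup.index_top, mul_one,
    ← relindex_sup_aux K A, mul_comm]
  exact Subgroup.relIndex_mul_index le_sup_left

lemma mem_image_coset_iff (K : Subgroup G) [K.Normal] (A : Subgroup G) (x : G) (q : G ⧸ K) :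
    q ∈ (QuotientGroup.mk x : G ⧸ K) • ((A.map (QuotientGroup.mk' K) : Subgroup (G ⧸ K)) : Set (G ⧸ K))
      ↔ ∃ k ∈ K, q.out * k ∈ x • (A : Set G) := by
  rw [mem_smul_coe_iff]
  constructor
  · rintro ⟨g, hg, hgeq⟩
    have : (QuotientGroup.mk (x * g) : G ⧸ K) = q := by
      rw [← QuotientGroup.out_eq' q]
      rw [QuotientGroup.mk'_apply] at hgeq
      have : (QuotientGroup.mk (x * g) : G ⧸ K) = (QuotientGroup.mk x : G ⧸ K) * QuotientGroup.mk g := rfl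
      rw [this, hgeq]
      simp [QuotientGroup.out_eq']
    rw [← QuotientGroup.out_eq' q, QuotientGroup.eq] at this
    refine ⟨((x * g)⁻¹ * q.out)⁻¹, inv_mem this, ?_⟩
    rw [mem_smul_coe_iff]
    have : x⁻¹ * (q.out * ((x * g)⁻¹ * q.out)⁻¹) = g := by group
    rw [this]
    exact hg
  · rintro ⟨k, hk, hmem⟩
    rw [mem_smul_coe_iff] at hmem
    refine ⟨x⁻¹ * (q.out * k), hmem, ?_⟩
    rw [QuotientGroup.mk'_apply]
    have h1 : (QuotientGroup.mk (x⁻¹ * (q.out * k)) : G ⧸ K)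
        = (QuotientGroup.mk x : G ⧸ K)⁻¹ * QuotientGroup.mk (q.out * k) := by
      simp [QuotientGroup.mk_mul, QuotientGroup.mk_inv]
    rw [h1]
    have h2 : (QuotientGroup.mk (q.out * k) : G ⧸ K) = QuotientGroup.mk q.out := by
      rw [QuotientGroup.eq]
      simpa using hk
    rw [h2, QuotientGroup.out_eq']


def StarIneq {G : Type u} [Group G] {ι : Type v} (H : Subgroup G)
    (Gs : ι → Subgroup G) (a : ι → G) (e : ι → ℕ) (M : ℕ) : Prop :=
  Nat.card {n : ℕ // n < H.index * M ∧ ∃ i, (Gs i).index * e i ∣ n} ≤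
    Nat.card {p : (G ⧸ H) × ℕ // p.2 < M ∧ ∃ i,
      p.1 ∈ (QuotientGroup.mk : G → G ⧸ H) '' ((a i) • ((Gs i : Set G))) ∧ e i ∣ p.2}

lemma ab_case {ι : Type v} (H : Subgroup G) (Gs : ι → Subgroup G) (a : ι → G)
    (e : ι → ℕ) (M : ℕ) (hfin : H.index ≠ 0) (hM : M ≠ 0) (he : ∀ i, e i ∣ M)
    (hsimple : ∀ i, Gs i = H ∨ Gs i = ⊤) : StarIneq H Gs a e M := by
  classical
  unfold StarIneq
  have finQ : Finite (G ⧸ H) :=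
    Nat.finite_of_card_ne_zero (by rwa [← Subgroup.index_eq_card])
  set N := H.index with hN
  have hN0 : 0 < N := Nat.pos_of_ne_zero hfin
  set A : ℕ → Prop := fun m => ∃ i, Gs i = ⊤ ∧ e i ∣ m with hA
  set B : ℕ → Prop := fun n => (∃ i, Gs i = H ∧ N * e i ∣ n) ∧ ¬ A n with hB
  have hAdvd : ∀ {n m : ℕ}, A n → n ∣ m → A m := by
    rintro n m ⟨i, hi, hd⟩ hnm
    exact ⟨i, hi, hd.trans hnm⟩
  have hpred : ∀ n, (∃ i, (Gs i).index * e i ∣ n) ↔ (A n ∨ B n) := by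
    intro n
    constructor
    · rintro ⟨i, hi⟩
      by_cases hAn : A n
      · exact Or.inl hAn
      rcases hsimple i with h | h
      · exact Or.inr ⟨⟨i, h, by rwa [h] at hi⟩, hAn⟩
      · exact Or.inl ⟨i, h, by simpa [h, Subgroup.index_top] using hi⟩
    · rintro (⟨i, hi, hd⟩ | ⟨⟨i, hi, hd⟩, -⟩)
      · exact ⟨i, by simpa [hi, Subgroup.index_top] using hd⟩
      · exact ⟨i, by rwa [hi]⟩
  have hper : ∀ j m, A (j * M + m) ↔ A m := by
    intro j m
    constructor <;> rintro ⟨i, hi, hd⟩ <;> refine ⟨i, hi, ?_⟩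
    · exact (Nat.dvd_add_right ((he i).mul_left j)).mp hd
    · exact Nat.dvd_add ((he i).mul_left j) hd
  have hLHS : Nat.card {n : ℕ // n < N * M ∧ ∃ i, (Gs i).index * e i ∣ n}
      ≤ N * ((Finset.range M).filter A).card + ((Finset.range (N * M)).filter B).card := by
    rw [natCard_subtype_lt]
    have hsub : (Finset.range (N * M)).filter (fun n => ∃ i, (Gs i).index * e i ∣ n)
        ⊆ ((Finset.range (N * M)).filter A) ∪ ((Finset.range (N * M)).filter B) := by
      intro n hn
      simp only [Finset.mem_filter, Finset.mem_union, Finset.mem_range] at hn ⊢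
      rcases (hpred n).1 hn.2 with h | h
      exacts [Or.inl ⟨hn.1, h⟩, Or.inr ⟨hn.1, h⟩]
    calc ((Finset.range (N * M)).filter (fun n => ∃ i, (Gs i).index * e i ∣ n)).card
        ≤ (((Finset.range (N * M)).filter A) ∪ ((Finset.range (N * M)).filter B)).card :=
          Finset.card_le_card hsub
      _ ≤ ((Finset.range (N * M)).filter A).card + ((Finset.range (N * M)).filter B).card :=
          Finset.card_union_le _ _
      _ = N * ((Finset.range M).filter A).card + ((Finset.range (N * M)).filter B).card := by
          rw [count_periodic N M A hper]
  refine hLHS.trans ?_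
  -- now the injection into the RHS set
  set RHSP : (G ⧸ H) × ℕ → Prop := fun p => ∃ i,
      p.1 ∈ (QuotientGroup.mk : G → G ⧸ H) '' ((a i) • ((Gs i : Set G))) ∧ e i ∣ p.2 with hRHSP
  have : Finite {p : (G ⧸ H) × ℕ // p.2 < M ∧ RHSP p} := finite_pair M RHSP
  let pick : {n : ℕ // n ∈ (Finset.range (N * M)).filter B} → ι := fun n =>
    ((Finset.mem_filter.mp n.2).2).1.choose
  have pickspec : ∀ n, Gs (pick n) = H ∧ N * e (pick n) ∣ n.1 := fun n =>
    ((Finset.mem_filter.mp n.2).2).1.choose_spec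
  have hBn : ∀ (n : {n : ℕ // n ∈ (Finset.range (N * M)).filter B}), ¬ A (n.1 / N) := by
    intro n hAq
    have hNdvd : N ∣ n.1 := (Dvd.intro (e (pick n)) rfl).trans (pickspec n).2
    have : A n.1 := hAdvd hAq ⟨N, (Nat.div_mul_cancel hNdvd).symm⟩
    exact ((Finset.mem_filter.mp n.2).2).2 this
  have hNdvd : ∀ (n : {n : ℕ // n ∈ (Finset.range (N * M)).filter B}), N ∣ n.1 :=
    fun n => (Dvd.intro (e (pick n)) rfl).trans (pickspec n).2
  let F : ((G ⧸ H) × {m : ℕ // m ∈ (Finset.range M).filter A}) ⊕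
      {n : ℕ // n ∈ (Finset.range (N * M)).filter B} →
      {p : (G ⧸ H) × ℕ // p.2 < M ∧ RHSP p} := fun t =>
    match t with
    | Sum.inl (q, m) => ⟨(q, m.1), by
        have hm := Finset.mem_filter.mp m.2
        obtain ⟨i, hi, hd⟩ := hm.2
        refine ⟨Finset.mem_range.mp hm.1, i, ?_, hd⟩
        rw [hi]
        exact mem_mk_image_top_iff H q⟩
    | Sum.inr n => ⟨(QuotientGroup.mk (a (pick n)), n.1 / N), by
        have hn := Finset.mem_filter.mp n.2
        refine ⟨?_, pick n, ?_, ?_⟩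
        · exact (Nat.div_lt_iff_lt_mul hN0).mpr ((mul_comm N M) ▸ Finset.mem_range.mp hn.1)
        · rw [(pickspec n).1]
          exact (mem_mk_image_self_iff H _).mpr rfl
        · exact Nat.dvd_div_of_mul_dvd (pickspec n).2⟩
  have hFinj : Function.Injective F := by
    rintro (⟨q, m⟩ | n) (⟨q', m'⟩ | n') h
    · simp only [F, Subtype.mk.injEq, Prod.mk.injEq] at h
      exact congrArg Sum.inl (Prod.ext h.1 (Subtype.ext h.2))
    · exfalso
      simp only [F, Subtype.mk.injEq, Prod.mk.injEq] at h
      have hAm : A m.1 := (Finset.mem_filter.mp m.2).2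
      exact hBn n' (by rwa [← h.2])
    · exfalso
      simp only [F, Subtype.mk.injEq, Prod.mk.injEq] at h
      have hAm : A m'.1 := (Finset.mem_filter.mp m'.2).2
      exact hBn n (by rwa [h.2])
    · simp only [F, Subtype.mk.injEq, Prod.mk.injEq] at h
      refine congrArg Sum.inr (Subtype.ext ?_)
      have h1 := Nat.div_mul_cancel (hNdvd n)
      have h2 := Nat.div_mul_cancel (hNdvd n')
      rw [← h1, ← h2, h.2]
  have hcard := Nat.card_le_card_of_injective F hFinj
  have hTcard : Nat.card (((G ⧸ H) × {m : ℕ // m ∈ (Finset.range M).filter A}) ⊕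
      {n : ℕ // n ∈ (Finset.range (N * M)).filter B})
      = N * ((Finset.range M).filter A).card + ((Finset.range (N * M)).filter B).card := by
    rw [Nat.card_sum, Nat.card_prod, Nat.card_eq_finsetCard, Nat.card_eq_finsetCard,
      ← Subgroup.index_eq_card]
  rw [hTcard] at hcard
  exact hcard


def PrimeChain {G : Type u} [Group G] (H : Subgroup G) : Prop :=
  ∃ (n : ℕ) (f : Fin (n + 1) → Subgroup G),
    f 0 = H ∧ f (Fin.last n) = ⊤ ∧
    ∀ i : Fin n, f i.castSucc ≤ f i.succ ∧
      (∀ x ∈ f i.succ, ∀ h ∈ f i.castSucc, x * h * x⁻¹ ∈ f i.castSucc) ∧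
      ((f i.castSucc).relIndex (f i.succ)).Prime

def CondSN {G : Type u} [Group G] {ι : Type v} (H : Subgroup G) (Gs : ι → Subgroup G) : Prop :=
  (SN H ⊤ ∧ ∀ i, SN (Gs i) ⊤) ∨ PrimeChain H

lemma step_case {ι : Type v} [Fintype ι] (H K : Subgroup G) (Gs : ι → Subgroup G) (a : ι → G)
    (e : ι → ℕ) (M : ℕ) (hfin : H.index ≠ 0) (hM : M ≠ 0) (hle : ∀ i, H ≤ Gs i)
    (he : ∀ i, e i ∣ M) [hKn : K.Normal] (hHK : H < K) (hKtop : K ≠ ⊤)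
    (hcondK : CondSN (H.subgroupOf K) (fun i => (Gs i).subgroupOf K))
    (hcondQ : ∀ i, SN ((Gs i).map (QuotientGroup.mk' K)) (⊤ : Subgroup (G ⧸ K)))
    (ih : ∀ {G' : Type u} [Group G'] {ι' : Type v} [Fintype ι'] (H' : Subgroup G')
      (Gs' : ι' → Subgroup G') (a' : ι' → G') (e' : ι' → ℕ) (M' : ℕ),
      H'.index < H.index → H'.index ≠ 0 → M' ≠ 0 → (∀ i, H' ≤ Gs' i) → (∀ i, e' i ∣ M') →
      CondSN H' Gs' → StarIneq H' Gs' a' e' M') :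
    StarIneq H Gs a e M := by
  classical
  -- index arithmetic
  have hrelmul : H.relIndex K * K.index = H.index := Subgroup.relIndex_mul_index hHK.le
  have hKidx0 : K.index ≠ 0 := fun h => hfin (by rw [← hrelmul, h, mul_zero])
  have hrel0 : H.relIndex K ≠ 0 := fun h => hfin (by rw [← hrelmul, h, zero_mul])
  have hrelne1 : H.relIndex K ≠ 1 := by
    intro h
    exact absurd (Subgroup.relIndex_eq_one.mp h) (not_le_of_gt hHK)
  have hKidxne1 : K.index ≠ 1 := fun h => hKtop (Subgroup.index_eq_one.mp h)
  have hKidx_lt : K.index < H.index := by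
    rw [← hrelmul]
    have h2 : 2 ≤ H.relIndex K := by omega
    calc K.index = 1 * K.index := (one_mul _).symm
    _ < H.relIndex K * K.index :=
        (Nat.mul_lt_mul_right (Nat.pos_of_ne_zero hKidx0)).mpr (by omega)
  have hrel_lt : H.relIndex K < H.index := by
    rw [← hrelmul]
    have h2 : 2 ≤ K.index := by omega
    calc H.relIndex K = H.relIndex K * 1 := (mul_one _).symm
    _ < H.relIndex K * K.index :=
        (Nat.mul_lt_mul_left (Nat.pos_of_ne_zero hrel0)).mpr (by omega)
  have finQ : Finite (G ⧸ K) :=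
    Nat.finite_of_card_ne_zero (by rwa [← Subgroup.index_eq_card])
  letI : Fintype (G ⧸ K) := Fintype.ofFinite _
  -- the W predicate and inner coset representatives
  set W : ι → (G ⧸ K) → Prop := fun i q => ∃ k ∈ K, q.out * k ∈ (a i) • ((Gs i : Set G))
    with hW
  have hWspec : ∀ (q : G ⧸ K) (i' : {i // W i q}),
      ∃ k ∈ K, q.out * k ∈ (a i'.1) • ((Gs i'.1 : Set G)) := fun q i' => i'.2
  let bK : ∀ (q : G ⧸ K), {i // W i q} → K := fun q i' =>
    ⟨(hWspec q i').choose, (hWspec q i').choose_spec.1⟩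
  have hbK : ∀ (q : G ⧸ K) (i' : {i // W i q}),
      q.out * (bK q i' : G) ∈ (a i'.1) • ((Gs i'.1 : Set G)) := fun q i' =>
    (hWspec q i').choose_spec.2
  -- Outer instance
  have houter : StarIneq (⊥ : Subgroup (G ⧸ K)) (fun i => (Gs i).map (QuotientGroup.mk' K))
      (fun i => QuotientGroup.mk (a i)) (fun i => (Gs i).relIndex K * e i)
      (H.relIndex K * M) := by
    apply ih
    · rw [Subgroup.index_bot, ← Subgroup.index_eq_card]
      exact hKidx_lt
    · rw [Subgroup.index_bot, ← Subgroup.index_eq_card]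
      exact hKidx0
    · exact Nat.mul_ne_zero hrel0 hM
    · exact fun i => bot_le
    · intro i
      refine Nat.mul_dvd_mul ?_ (he i)
      exact Subgroup.index_dvd_of_le (Subgroup.comap_mono (hle i))
    · refine Or.inl ⟨?_, hcondQ⟩
      exact SN.step (SN.refl ⊥) bot_le (by intro x _ h hh; simp only [Subgroup.mem_bot] at hh ⊢; simp [hh])
  -- Inner instances
  have hinner : ∀ q : G ⧸ K, StarIneq (H.subgroupOf K)
      (fun i' : {i // W i q} => (Gs i'.1).subgroupOf K) (bK q)
      (fun i' => e i'.1) M := by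
    intro q
    apply ih
    · exact hrel_lt
    · exact hrel0
    · exact hM
    · exact fun i' => Subgroup.comap_mono (hle i'.1)
    · exact fun i' => he i'.1
    · rcases hcondK with ⟨h1, h2⟩ | h
      · exact Or.inl ⟨h1, fun i' => h2 i'.1⟩
      · exact Or.inr h
  -- ===== bridges =====
  unfold StarIneq at houter hinner ⊢
  -- Bridge 1 : goal LHS = outer LHS
  have hLHSeq : Nat.card {n : ℕ // n < H.index * M ∧ ∃ i, (Gs i).index * e i ∣ n}
      = Nat.card {n : ℕ // n < (⊥ : Subgroup (G ⧸ K)).index * (H.relIndex K * M) ∧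
          ∃ i, ((Gs i).map (QuotientGroup.mk' K)).index * ((Gs i).relIndex K * e i) ∣ n} := by
    have hb : (⊥ : Subgroup (G ⧸ K)).index * (H.relIndex K * M) = H.index * M := by
      rw [Subgroup.index_bot, ← Subgroup.index_eq_card, ← hrelmul]
      ring
    have hd : ∀ i, ((Gs i).map (QuotientGroup.mk' K)).index * ((Gs i).relIndex K * e i)
        = (Gs i).index * e i := by
      intro i
      rw [← mul_assoc, index_map_mk']
    refine Nat.card_congr (Equiv.subtypeEquivRight fun n => ?_)
    constructor
    · rintro ⟨h1, i, h2⟩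
      exact ⟨by rw [hb]; exact h1, i, by rw [hd i]; exact h2⟩
    · rintro ⟨h1, i, h2⟩
      exact ⟨by rw [← hb]; exact h1, i, by rw [← hd i]; exact h2⟩
  rw [hLHSeq]
  refine le_trans houter ?_
  -- Bridge 2 : outer RHS = sum over q of inner LHS
  have hbotinj : Function.Injective
      (QuotientGroup.mk : (G ⧸ K) → (G ⧸ K) ⧸ (⊥ : Subgroup (G ⧸ K))) := by
    intro x y h
    have h2 := QuotientGroup.eq.mp h
    simp only [Subgroup.mem_bot, inv_mul_eq_one] at h2
    exact h2
  have hbotsurj : Function.Surjective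
      (QuotientGroup.mk : (G ⧸ K) → (G ⧸ K) ⧸ (⊥ : Subgroup (G ⧸ K))) :=
    fun x => ⟨x.out, QuotientGroup.out_eq' x⟩
  set ebot : (G ⧸ K) ≃ ((G ⧸ K) ⧸ (⊥ : Subgroup (G ⧸ K))) :=
    Equiv.ofBijective _ ⟨hbotinj, hbotsurj⟩ with hebot
  haveI hfibfin : ∀ q : G ⧸ K, Finite {m : ℕ // m < H.relIndex K * M ∧
      ∃ i, q ∈ (QuotientGroup.mk (a i) : G ⧸ K) •
        (((Gs i).map (QuotientGroup.mk' K) : Subgroup (G ⧸ K)) : Set (G ⧸ K)) ∧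
        (Gs i).relIndex K * e i ∣ m} := fun q => finite_nat_lt _ _
  have hOuterRHS : Nat.card {p : ((G ⧸ K) ⧸ (⊥ : Subgroup (G ⧸ K))) × ℕ //
        p.2 < H.relIndex K * M ∧ ∃ i,
        p.1 ∈ (QuotientGroup.mk : (G ⧸ K) → (G ⧸ K) ⧸ (⊥ : Subgroup (G ⧸ K))) ''
          ((QuotientGroup.mk (a i) : G ⧸ K) •
            (((Gs i).map (QuotientGroup.mk' K) : Subgroup (G ⧸ K)) : Set (G ⧸ K))) ∧
        (Gs i).relIndex K * e i ∣ p.2}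
      = ∑ q : G ⧸ K, Nat.card {m : ℕ // m < H.relIndex K * M ∧
          ∃ i' : {i // W i q}, ((Gs i'.1).subgroupOf K).index * e i'.1 ∣ m} := by
    have e1 : {p : (G ⧸ K) × ℕ // p.2 < H.relIndex K * M ∧ ∃ i,
        p.1 ∈ (QuotientGroup.mk (a i) : G ⧸ K) •
          (((Gs i).map (QuotientGroup.mk' K) : Subgroup (G ⧸ K)) : Set (G ⧸ K)) ∧
        (Gs i).relIndex K * e i ∣ p.2}
        ≃ {p : ((G ⧸ K) ⧸ (⊥ : Subgroup (G ⧸ K))) × ℕ // p.2 < H.relIndex K * M ∧ ∃ i,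
        p.1 ∈ (QuotientGroup.mk : (G ⧸ K) → (G ⧸ K) ⧸ (⊥ : Subgroup (G ⧸ K))) ''
          ((QuotientGroup.mk (a i) : G ⧸ K) •
            (((Gs i).map (QuotientGroup.mk' K) : Subgroup (G ⧸ K)) : Set (G ⧸ K))) ∧
        (Gs i).relIndex K * e i ∣ p.2} := by
      refine Equiv.subtypeEquiv (Equiv.prodCongr ebot (Equiv.refl ℕ)) fun p => ?_
      refine and_congr Iff.rfl (exists_congr fun i => and_congr ?_ Iff.rfl)
      exact (hbotinj.mem_set_image).symm
    rw [← Nat.card_congr e1, natCard_prod_eq_sum]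
    refine Finset.sum_congr rfl fun q _ => ?_
    refine Nat.card_congr (Equiv.subtypeEquivRight fun m => ?_)
    refine and_congr Iff.rfl ?_
    constructor
    · rintro ⟨i, hq, hd⟩
      exact ⟨⟨i, (mem_image_coset_iff K (Gs i) (a i) q).mp hq⟩, hd⟩
    · rintro ⟨⟨i, hWi⟩, hd⟩
      exact ⟨i, (mem_image_coset_iff K (Gs i) (a i) q).mpr hWi, hd⟩
  rw [hOuterRHS]
  -- Bridge middle : sum of inner LHS ≤ sum of inner RHS
  refine le_trans (Finset.sum_le_sum fun q _ => hinner q) (le_of_eq ?_)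
  -- Bridge 3 : sum of inner RHS = goal RHS
  have hmemk : ∀ g : G, ((QuotientGroup.mk g : G ⧸ K)).out⁻¹ * g ∈ K :=
    fun g => QuotientGroup.eq.mp (QuotientGroup.out_eq' (QuotientGroup.mk g : G ⧸ K))
  set φ := Subgroup.quotientEquivProdOfLE hHK.le with hphidef
  have hphi1 : ∀ g : G, (φ (QuotientGroup.mk g)).1 = (QuotientGroup.mk g : G ⧸ K) := fun g => rfl
  have hphi2 : ∀ g : G, (φ (QuotientGroup.mk g)).2
      = (QuotientGroup.mk (⟨((QuotientGroup.mk g : G ⧸ K)).out⁻¹ * g, hmemk g⟩ : K)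
        : K ⧸ H.subgroupOf K) := fun g => rfl
  have keyi : ∀ (g : G) (i : ι),
      ((QuotientGroup.mk g : G ⧸ H) ∈ (QuotientGroup.mk : G → G ⧸ H) ''
        ((a i) • ((Gs i : Set G))))
      ↔ ∃ h : W i (QuotientGroup.mk g : G ⧸ K),
          (φ (QuotientGroup.mk g)).2 ∈ (QuotientGroup.mk : K → K ⧸ H.subgroupOf K) ''
            ((bK (QuotientGroup.mk g : G ⧸ K) ⟨i, h⟩) •
              (((Gs i).subgroupOf K : Subgroup K) : Set K)) := by
    intro g i
    have hsub : H.subgroupOf K ≤ (Gs i).subgroupOf K := Subgroup.comap_mono (hle i)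
    have htk0 : ((QuotientGroup.mk g : G ⧸ K)).out * (((QuotientGroup.mk g : G ⧸ K)).out⁻¹ * g)
        = g := by group
    rw [mem_mk_image_iff (hle i), hphi2 g]
    constructor
    · intro hg
      have hWi : W i (QuotientGroup.mk g : G ⧸ K) :=
        ⟨((QuotientGroup.mk g : G ⧸ K)).out⁻¹ * g, hmemk g, by rw [htk0]; exact hg⟩
      refine ⟨hWi, ?_⟩
      refine (mem_mk_image_iff hsub).mpr ?_
      refine mem_smul_coe_iff.mpr ?_
      rw [Subgroup.mem_subgroupOf]
      have hwmem := hbK (QuotientGroup.mk g : G ⧸ K) ⟨i, hWi⟩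
      have h2 : (((bK (QuotientGroup.mk g : G ⧸ K) ⟨i, hWi⟩)⁻¹ *
          (⟨((QuotientGroup.mk g : G ⧸ K)).out⁻¹ * g, hmemk g⟩ : K) : K) : G)
          = (((QuotientGroup.mk g : G ⧸ K)).out *
              ((bK (QuotientGroup.mk g : G ⧸ K) ⟨i, hWi⟩ : K) : G))⁻¹ * g := by
        push_cast
        group
      rw [h2]
      exact (smul_coe_eq_of_mem hwmem g).mp hg
    · rintro ⟨hWi, hr⟩
      have hwmem := hbK (QuotientGroup.mk g : G ⧸ K) ⟨i, hWi⟩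
      have hr2 := mem_smul_coe_iff.mp ((mem_mk_image_iff hsub).mp hr)
      rw [Subgroup.mem_subgroupOf] at hr2
      have h2 : (((bK (QuotientGroup.mk g : G ⧸ K) ⟨i, hWi⟩)⁻¹ *
          (⟨((QuotientGroup.mk g : G ⧸ K)).out⁻¹ * g, hmemk g⟩ : K) : K) : G)
          = (((QuotientGroup.mk g : G ⧸ K)).out *
              ((bK (QuotientGroup.mk g : G ⧸ K) ⟨i, hWi⟩ : K) : G))⁻¹ * g := by
        push_cast
        group
      rw [h2] at hr2
      exact (smul_coe_eq_of_mem hwmem g).mpr hr2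
  -- assemble bridge 3
  set D : (G ⧸ K) × ((K ⧸ H.subgroupOf K) × ℕ) → Prop := fun x => x.2.2 < M ∧
      ∃ i' : {i // W i x.1}, x.2.1 ∈ (QuotientGroup.mk : K → K ⧸ H.subgroupOf K) ''
        ((bK x.1 i') • (((Gs i'.1).subgroupOf K : Subgroup K) : Set K)) ∧ e i'.1 ∣ x.2.2
    with hD
  haveI hfibfin2 : ∀ q : G ⧸ K, Finite {y : (K ⧸ H.subgroupOf K) × ℕ // D (q, y)} := by
    intro q
    have : Finite (K ⧸ H.subgroupOf K) := by
      refine Nat.finite_of_card_ne_zero ?_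
      rw [← Subgroup.index_eq_card]
      exact hrel0
    exact finite_pair M _
  have hgoalRHS : Nat.card {p : (G ⧸ H) × ℕ // p.2 < M ∧ ∃ i,
        p.1 ∈ (QuotientGroup.mk : G → G ⧸ H) '' ((a i) • ((Gs i : Set G))) ∧ e i ∣ p.2}
      = ∑ q : G ⧸ K, Nat.card {y : (K ⧸ H.subgroupOf K) × ℕ // D (q, y)} := by
    have e2 : {p : (G ⧸ H) × ℕ // p.2 < M ∧ ∃ i,
          p.1 ∈ (QuotientGroup.mk : G → G ⧸ H) '' ((a i) • ((Gs i : Set G))) ∧ e i ∣ p.2}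
        ≃ {x : (G ⧸ K) × ((K ⧸ H.subgroupOf K) × ℕ) // D x} := by
      refine Equiv.subtypeEquiv
        ((Equiv.prodCongr φ (Equiv.refl ℕ)).trans (Equiv.prodAssoc _ _ _)) fun p => ?_
      obtain ⟨x, m⟩ := p
      induction x using QuotientGroup.induction_on with
      | H g =>
        simp only [Equiv.trans_apply, Equiv.prodCongr_apply, Equiv.prodAssoc_apply,
          Equiv.coe_refl, id_eq, Prod.map_apply, hD]
        refine and_congr Iff.rfl ?_
        constructor
        · rintro ⟨i, hp, hd⟩
          obtain ⟨hWi, hr⟩ := (keyi g i).mp hp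
          exact ⟨⟨i, hWi⟩, hr, hd⟩
        · rintro ⟨⟨i, hWi⟩, hr, hd⟩
          exact ⟨i, (keyi g i).mpr ⟨hWi, hr⟩, hd⟩
    rw [Nat.card_congr e2, natCard_prod_eq_sum]
  rw [hgoalRHS]


theorem starAux : ∀ (N : ℕ) {G : Type u} [Group G] {ι : Type v} [Fintype ι] (H : Subgroup G)
    (Gs : ι → Subgroup G) (a : ι → G) (e : ι → ℕ) (M : ℕ),
    H.index = N → H.index ≠ 0 → M ≠ 0 → (∀ i, H ≤ Gs i) → (∀ i, e i ∣ M) →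
    CondSN H Gs → StarIneq H Gs a e M := by
  intro N
  induction N using Nat.strong_induction_on with
  | _ N ihN =>
    intro G _ ι _ H Gs a e M hNdef hfin hM hle he hcond
    by_cases hsimple : ∀ i, Gs i = H ∨ Gs i = ⊤
    · exact ab_case H Gs a e M hfin hM he hsimple
    push_neg at hsimple
    obtain ⟨i₀, hi₀H, hi₀T⟩ := hsimple
    have hih : ∀ {G' : Type u} [Group G'] {ι' : Type v} [Fintype ι'] (H' : Subgroup G')
        (Gs' : ι' → Subgroup G') (a' : ι' → G') (e' : ι' → ℕ) (M' : ℕ),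
        H'.index < H.index → H'.index ≠ 0 → M' ≠ 0 → (∀ i, H' ≤ Gs' i) → (∀ i, e' i ∣ M') →
        CondSN H' Gs' → StarIneq H' Gs' a' e' M' := by
      intro G' _ ι' _ H' Gs' a' e' M' hlt h1 h2 h3 h4 h5
      exact ihN H'.index (hNdef ▸ hlt) H' Gs' a' e' M' rfl h1 h2 h3 h4 h5
    rcases hcond with ⟨hSNH, hSNGs⟩ | hchain
    · -- all subnormal
      obtain ⟨K, hKn, hKle, hKtop⟩ := (hSNGs i₀).exists_normal rfl hi₀T
      have hHK : H < K := by
        refine lt_of_le_of_ne ((hle i₀).trans hKle) ?_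
        intro hEq
        exact hi₀H (le_antisymm (hEq ▸ hKle) (hle i₀))
      haveI := hKn
      refine step_case H K Gs a e M hfin hM hle he hHK hKtop ?_ ?_ hih
      · exact Or.inl ⟨hSNH.subgroupOf_top K, fun i => (hSNGs i).subgroupOf_top K⟩
      · exact fun i => (hSNGs i).map_top (QuotientGroup.mk'_surjective K)
    · -- prime chain
      obtain ⟨n, f, hf0, hflast, hfstep⟩ := hchain
      cases n with
      | zero =>
          exfalso
          have hHtop : H = ⊤ := by rw [← hf0]; exact hflast
          exact hi₀T (le_antisymm le_top (hHtop ▸ hle i₀))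
      | succ m =>
        set K := f (Fin.castSucc (Fin.last m)) with hK
        have hmono : Monotone f := Fin.monotone_iff_le_succ.mpr (fun i => (hfstep i).1)
        have hstepl := hfstep (Fin.last m)
        have hsuccl : (Fin.last m).succ = Fin.last (m + 1) := Fin.succ_last m
        have hKn : K.Normal := by
          constructor
          intro x hx g
          refine (hfstep (Fin.last m)).2.1 g ?_ x hx
          rw [hsuccl, hflast]
          trivial
        have hprimeK : K.index.Prime := by
          have := hstepl.2.2
          rwa [hsuccl, hflast, Subgroup.relIndex_top_right] at this
        have hHleK : H ≤ K := by
          rw [← hf0]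
          exact hmono (Fin.zero_le _)
        have hKtop : K ≠ ⊤ := by
          intro h
          rw [h, Subgroup.index_top] at hprimeK
          exact Nat.not_prime_one hprimeK
        have hHK : H < K := by
          refine lt_of_le_of_ne hHleK ?_
          intro hEq
          have hHidx : H.index.Prime := by rwa [hEq]
          have hdvd : (Gs i₀).index ∣ H.index := Subgroup.index_dvd_of_le (hle i₀)
          rcases (Nat.Prime.eq_one_or_self_of_dvd hHidx _ hdvd) with h1 | hp
          · exact hi₀T (Subgroup.index_eq_one.mp h1)
          · have hrm : H.relIndex (Gs i₀) * (Gs i₀).index = H.index :=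
              Subgroup.relIndex_mul_index (hle i₀)
            rw [hp] at hrm
            have hrel1 : H.relIndex (Gs i₀) = 1 := by
              refine Nat.eq_of_mul_eq_mul_right (Nat.pos_of_ne_zero hfin) ?_
              rw [hrm, one_mul]
            exact hi₀H (le_antisymm (Subgroup.relIndex_eq_one.mp hrel1) (hle i₀))
        haveI := hKn
        refine step_case H K Gs a e M hfin hM hle he hHK hKtop ?_ ?_ hih
        · -- inner prime chain
          refine Or.inr ⟨m, fun j => (f j.castSucc).subgroupOf K, ?_, ?_, ?_⟩
          · show (f (Fin.castSucc 0)).subgroupOf K = H.subgroupOf K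
            rw [Fin.castSucc_zero, hf0]
          · show (f (Fin.castSucc (Fin.last m))).subgroupOf K = ⊤
            rw [← hK, Subgroup.subgroupOf_self]
          · intro j
            have hstepj := hfstep j.castSucc
            have hsucc : (j.castSucc).succ = (j.succ).castSucc := Fin.succ_castSucc j
            have hle1 : f (j.castSucc.castSucc) ≤ f (j.succ.castSucc) :=
              le_trans hstepj.1 (le_of_eq (congrArg f hsucc))
            have hleK : f ((j.succ).castSucc) ≤ K :=
              hmono (Fin.castSucc_le_castSucc_iff.mpr (Fin.le_last _))
            refine ⟨?_, ?_, ?_⟩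
            · show (f (j.castSucc.castSucc)).subgroupOf K ≤ (f (j.succ.castSucc)).subgroupOf K
              intro x hx
              rw [Subgroup.mem_subgroupOf] at hx ⊢
              exact hle1 hx
            · show ∀ x ∈ (f (j.succ.castSucc)).subgroupOf K,
                ∀ h ∈ (f (j.castSucc.castSucc)).subgroupOf K,
                  x * h * x⁻¹ ∈ (f (j.castSucc.castSucc)).subgroupOf K
              intro x hx h hh
              rw [Subgroup.mem_subgroupOf] at hx hh ⊢
              push_cast
              exact hstepj.2.1 x (by rwa [hsucc]) h hh
            · show (((f (j.castSucc.castSucc)).subgroupOf K).relIndex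
                ((f (j.succ.castSucc)).subgroupOf K)).Prime
              rw [Subgroup.relIndex_subgroupOf hleK]
              have := hstepj.2.2
              rwa [hsucc] at this
        · -- quotient has prime order
          intro i
          refine sn_top_of_prime_card ?_ _
          rwa [← Subgroup.index_eq_card]


lemma card_pair_eq_mul {α : Type*} (P : α → Prop) (M : ℕ) :
    Nat.card {p : α × ℕ // p.2 < M ∧ P p.1} = Nat.card {q : α // P q} * M := by
  have E : {p : α × ℕ // p.2 < M ∧ P p.1} ≃ ({q : α // P q} × Fin M) :=
    { toFun := fun p => (⟨p.1.1, p.2.2⟩, ⟨p.1.2, p.2.1⟩)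
      invFun := fun x => ⟨(x.1.1, x.2.1), x.2.2, x.1.2⟩
      left_inv := fun p => rfl
      right_inv := fun x => rfl }
  rw [Nat.card_congr E, Nat.card_prod]
  congr 1
  simp [Nat.card_eq_fintype_card]

lemma card_fst_pred {α β : Type w} (P : α → Prop) :
    Nat.card {x : α × β // P x.1} = Nat.card {q : α // P q} * Nat.card β := by
  have E : {x : α × β // P x.1} ≃ ({q : α // P q} × β) :=
    { toFun := fun x => (⟨x.1.1, x.2⟩, x.1.2)
      invFun := fun x => ⟨(x.1.1, x.2), x.1.2⟩
      left_inv := fun x => rfl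
      right_inv := fun x => rfl }
  rw [Nat.card_congr E, Nat.card_prod]


lemma sn_finset_inf {ι : Type*} (s : Finset ι) (F : ι → Subgroup G)
    (h : ∀ i ∈ s, SN (F i) ⊤) : SN (s.inf F) ⊤ := by
  induction s using Finset.cons_induction with
  | empty => rw [Finset.inf_empty]; exact SN.refl ⊤
  | cons j s hj ih =>
      rw [Finset.inf_cons]
      exact SN.inf (h j (Finset.mem_cons_self j s)) (ih fun i hi => h i (Finset.mem_cons_of_mem hi))


end CosetCount

open CosetCount

theorem card_cosets_union_ge {G : Type*} [Group G] (H : Subgroup G)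
    (hH : H.index ≠ 0) (k : ℕ) (Gs : Fin k → Subgroup G) (hle : ∀ i, H ≤ Gs i)
    (hcond : (∀ i, IsSubnormal (Gs i)) ∨
      ∃ (n : ℕ) (f : Fin (n + 1) → Subgroup G),
        f 0 = H ∧ f (Fin.last n) = ⊤ ∧
        ∀ i : Fin n, f i.castSucc ≤ f i.succ ∧
          (∀ x ∈ f i.succ, ∀ h ∈ f i.castSucc, x * h * x⁻¹ ∈ f i.castSucc) ∧
          ((f i.castSucc).relIndex (f i.succ)).Prime)
    (a : Fin k → G) :
    Nat.card {n : ℕ // n < H.index ∧ ∃ i, (Gs i).index ∣ n} ≤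
      Nat.card ((QuotientGroup.mk (s := H)) ''
        (⋃ i, (fun g => a i * g) '' (Gs i : Set G)) : Set (G ⧸ H)) := by
  classical
  have himg : (⋃ i, (fun g => (a i) * g) '' ((Gs i : Set G))) = ⋃ i, (a i) • ((Gs i : Set G)) := by
    refine Set.iUnion_congr fun i => ?_
    ext x
    constructor
    · rintro ⟨y, hy, rfl⟩
      exact ⟨y, hy, rfl⟩
    · rintro ⟨y, hy, rfl⟩
      exact ⟨y, hy, rfl⟩
  rw [himg]
  have hcover : ((QuotientGroup.mk (s := H)) '' (⋃ i, (a i) • ((Gs i : Set G)))) =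
      {q : G ⧸ H | ∃ i, q ∈ (QuotientGroup.mk : G → G ⧸ H) '' ((a i) • ((Gs i : Set G)))} := by
    rw [Set.image_iUnion]
    ext q
    simp [Set.mem_iUnion]
  rw [hcover]
  rcases hcond with hsub | hchain
  · -- all G i subnormal
    set H' := (Finset.univ : Finset (Fin k)).inf Gs with hH'def
    have hH'le : H ≤ H' := Finset.le_inf fun i _ => hle i
    have hle' : ∀ i, H' ≤ Gs i := fun i => Finset.inf_le (Finset.mem_univ i)
    have hSN' : SN H' ⊤ := sn_finset_inf _ _ (fun i _ => sn_top_of_isSubnormal (hsub i))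
    have hfin' : H'.index ≠ 0 := by
      intro h0
      apply hH
      have := Subgroup.index_dvd_of_le hH'le
      rwa [h0, zero_dvd_iff] at this
    have hrm : H.relIndex H' * H'.index = H.index := Subgroup.relIndex_mul_index hH'le
    have hM0ne : H.relIndex H' ≠ 0 := fun h => hH (by rw [← hrm, h, zero_mul])
    have hstar := starAux H'.index H' Gs a (fun _ => 1) (H.relIndex H') rfl hfin' hM0ne hle'
      (fun _ => one_dvd _) (Or.inl ⟨hSN', fun i => sn_top_of_isSubnormal (hsub i)⟩)
    unfold StarIneq at hstar
    have hL : Nat.card {n : ℕ // n < H.index ∧ ∃ i, (Gs i).index ∣ n}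
        = Nat.card {n : ℕ // n < H'.index * H.relIndex H' ∧ ∃ i, (Gs i).index * 1 ∣ n} := by
      refine Nat.card_congr (Equiv.subtypeEquivRight fun n => ?_)
      rw [mul_comm H'.index (H.relIndex H'), hrm]
      simp
    have hR1 : Nat.card {p : (G ⧸ H') × ℕ // p.2 < H.relIndex H' ∧ ∃ i,
          p.1 ∈ (QuotientGroup.mk : G → G ⧸ H') '' ((a i) • ((Gs i : Set G))) ∧ 1 ∣ p.2}
        = Nat.card {q : G ⧸ H' // ∃ i,
          q ∈ (QuotientGroup.mk : G → G ⧸ H') '' ((a i) • ((Gs i : Set G)))} * H.relIndex H' := by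
      rw [← card_pair_eq_mul]
      refine Nat.card_congr (Equiv.subtypeEquivRight fun p => ?_)
      simp
    have hiff : ∀ q : G ⧸ H,
        (∃ i, q ∈ (QuotientGroup.mk : G → G ⧸ H) '' ((a i) • (Gs i : Set G)))
        ↔ (∃ i, ((Subgroup.quotientEquivProdOfLE hH'le) q).1
            ∈ (QuotientGroup.mk : G → G ⧸ H') '' ((a i) • (Gs i : Set G))) := by
      intro q
      induction q using QuotientGroup.induction_on with
      | H g =>
        have h1 : ((Subgroup.quotientEquivProdOfLE hH'le) (QuotientGroup.mk g)).1
            = (QuotientGroup.mk g : G ⧸ H') := rfl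
        rw [h1]
        exact exists_congr fun i => by rw [mem_mk_image_iff (hle i), mem_mk_image_iff (hle' i)]
    have hR2 : Nat.card {q : G ⧸ H // ∃ i,
          q ∈ (QuotientGroup.mk : G → G ⧸ H) '' ((a i) • ((Gs i : Set G)))}
        = Nat.card {q : G ⧸ H' // ∃ i,
          q ∈ (QuotientGroup.mk : G → G ⧸ H') '' ((a i) • ((Gs i : Set G)))} * H.relIndex H' := by
      calc Nat.card {q : G ⧸ H // ∃ i,
            q ∈ (QuotientGroup.mk : G → G ⧸ H) '' ((a i) • ((Gs i : Set G)))}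
          = Nat.card {x : (G ⧸ H') × (H' ⧸ H.subgroupOf H') // ∃ i,
            x.1 ∈ (QuotientGroup.mk : G → G ⧸ H') '' ((a i) • ((Gs i : Set G)))} :=
            Nat.card_congr (Equiv.subtypeEquiv (q := fun x : (G ⧸ H') × (H' ⧸ H.subgroupOf H') =>
              ∃ i, x.1 ∈ (QuotientGroup.mk : G → G ⧸ H') '' ((a i) • ((Gs i : Set G))))
              (Subgroup.quotientEquivProdOfLE hH'le) hiff)
        _ = Nat.card {q : G ⧸ H' // ∃ i,
            q ∈ (QuotientGroup.mk : G → G ⧸ H') '' ((a i) • ((Gs i : Set G)))}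
              * Nat.card (H' ⧸ H.subgroupOf H') := card_fst_pred (β := H' ⧸ H.subgroupOf H')
                (fun q : G ⧸ H' => ∃ i, q ∈ (QuotientGroup.mk : G → G ⧸ H') ''
                  ((a i) • ((Gs i : Set G))))
        _ = Nat.card {q : G ⧸ H' // ∃ i,
            q ∈ (QuotientGroup.mk : G → G ⧸ H') '' ((a i) • ((Gs i : Set G)))}
              * H.relIndex H' := by
            rw [← Subgroup.index_eq_card]
            rfl
    calc Nat.card {n : ℕ // n < H.index ∧ ∃ i, (Gs i).index ∣ n}
        = Nat.card {n : ℕ // n < H'.index * H.relIndex H' ∧ ∃ i, (Gs i).index * 1 ∣ n} := hL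
      _ ≤ _ := hstar
      _ = Nat.card {q : G ⧸ H' // ∃ i,
            q ∈ (QuotientGroup.mk : G → G ⧸ H') '' ((a i) • ((Gs i : Set G)))} * H.relIndex H' := hR1
      _ = Nat.card {q : G ⧸ H // ∃ i,
            q ∈ (QuotientGroup.mk : G → G ⧸ H) '' ((a i) • ((Gs i : Set G)))} := hR2.symm
  · -- prime chain
    have hstar := starAux H.index H Gs a (fun _ => 1) 1 rfl hH one_ne_zero hle
      (fun _ => one_dvd _) (Or.inr hchain)
    unfold StarIneq at hstar
    have hL : Nat.card {n : ℕ // n < H.index ∧ ∃ i, (Gs i).index ∣ n}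
        = Nat.card {n : ℕ // n < H.index * 1 ∧ ∃ i, (Gs i).index * 1 ∣ n} := by
      refine Nat.card_congr (Equiv.subtypeEquivRight fun n => ?_)
      simp
    have hRa : Nat.card {p : (G ⧸ H) × ℕ // p.2 < 1 ∧ ∃ i,
          p.1 ∈ (QuotientGroup.mk : G → G ⧸ H) '' ((a i) • ((Gs i : Set G))) ∧ 1 ∣ p.2}
        = Nat.card {p : (G ⧸ H) × ℕ // p.2 < 1 ∧ ∃ i,
          p.1 ∈ (QuotientGroup.mk : G → G ⧸ H) '' ((a i) • ((Gs i : Set G)))} :=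
      Nat.card_congr (Equiv.subtypeEquivRight fun p => by simp)
    rw [hL]
    refine hstar.trans (le_of_eq ?_)
    calc Nat.card {p : (G ⧸ H) × ℕ // p.2 < 1 ∧ ∃ i,
          p.1 ∈ (QuotientGroup.mk : G → G ⧸ H) '' ((a i) • ((Gs i : Set G))) ∧ 1 ∣ p.2}
        = Nat.card {p : (G ⧸ H) × ℕ // p.2 < 1 ∧ ∃ i,
          p.1 ∈ (QuotientGroup.mk : G → G ⧸ H) '' ((a i) • ((Gs i : Set G)))} := hRa
      _ = Nat.card {q : G ⧸ H // ∃ i,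
          q ∈ (QuotientGroup.mk : G → G ⧸ H) '' ((a i) • ((Gs i : Set G)))} * 1 :=
          card_pair_eq_mul (fun q : G ⧸ H => ∃ i,
            q ∈ (QuotientGroup.mk : G → G ⧸ H) '' ((a i) • ((Gs i : Set G)))) 1
      _ = Nat.card {q : G ⧸ H // ∃ i,
          q ∈ (QuotientGroup.mk : G → G ⧸ H) '' ((a i) • ((Gs i : Set G)))} := mul_one _
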